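/- Let E be a real inner product space that is also an ordered vector space (the order is translation-invariant and invariant under multiplication by nonnegative scalars) whose order is directed (every two elements have a common upper bound). Then the following are equivalent: (i) every pair {x, 0} in E has a supremum, and the induced norm is a lattice norm in the sense that whenever s is the supremum of {x, -x}, t is the supremum of {y, -y}, and s ≤ t, then ‖x‖ ≤ ‖y‖; (ii) every x ∈ E has a unique best approximation P(x) from the positive cone E⁺ = {z ∈ E : 0 ≤ z}, and the map P is isotone (x ≤ y implies P(x) ≤ P(y)) and subadditive (P(x+y) ≤ P(x) + P(y) for all x, y). Moreover, in this case P(x) is the supremum of {x, 0} for every x ∈ E. -/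

import Mathlib

set_option linter.unusedSectionVars false

/-- `p` is a best approximation to `x` from the set `A`. -/
def IsBestApprox {E : Type*} [NormedAddCommGroup E] (A : Set E) (x p : E) : Prop :=
  p ∈ A ∧ ∀ y ∈ A, ‖x - p‖ ≤ ‖x - y‖

section Helpers

lemma aux_le (c d : ℝ) (h : ∀ t : ℝ, 0 < t → t ≤ 1 → c ≤ t * d) : c ≤ 0 := by
  by_contra hc
  push_neg at hc
  have hd : 0 < d := lt_of_lt_of_le hc (by simpa using h 1 one_pos le_rfl)
  have ht : (0:ℝ) < min 1 (c / (2 * d)) := by positivity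
  have := h _ ht (min_le_left _ _)
  have h2 : min 1 (c / (2 * d)) * d ≤ (c / (2 * d)) * d :=
    mul_le_mul_of_nonneg_right (min_le_right _ _) hd.le
  have h3 : (c / (2 * d)) * d = c / 2 := by field_simp
  linarith

variable {E : Type*} [NormedAddCommGroup E] [InnerProductSpace ℝ E] [PartialOrder E]

lemma pair_lub_iff {a b s : E} :
    IsLUB {a, b} s ↔ (a ≤ s ∧ b ≤ s) ∧ ∀ c, a ≤ c → b ≤ c → s ≤ c := by
  constructor
  · rintro ⟨h1, h2⟩
    refine ⟨⟨h1 (by simp), h1 (by simp)⟩, fun c hac hbc => h2 ?_⟩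
    rintro y (rfl | rfl) <;> assumption
  · rintro ⟨⟨h1, h2⟩, h3⟩
    constructor
    · rintro y (rfl | rfl) <;> assumption
    · rintro c hc
      exact h3 c (hc (by simp)) (hc (by simp))

section Order
variable (hadd : ∀ x y z : E, x ≤ y → x + z ≤ y + z)
include hadd

lemma le_iff_sub (a b : E) : a ≤ b ↔ 0 ≤ b - a := by
  constructor
  · intro h; simpa [sub_eq_add_neg] using hadd a b (-a) h
  · intro h; simpa using hadd 0 (b - a) a h

lemma pos_add {a b : E} (ha : 0 ≤ a) (hb : 0 ≤ b) : 0 ≤ a + b := by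
  have := hadd 0 a b ha
  simp only [zero_add] at this
  have h2 := hadd 0 b 0 hb
  simp only [zero_add, add_zero] at h2
  calc (0:E) ≤ b := h2
    _ ≤ a + b := by simpa [add_comm] using this

lemma pair_shift {a b c s : E} (h : IsLUB {a, b} s) : IsLUB {a + c, b + c} (s + c) := by
  rw [pair_lub_iff] at h ⊢
  obtain ⟨⟨h1, h2⟩, h3⟩ := h
  refine ⟨⟨hadd _ _ _ h1, hadd _ _ _ h2⟩, fun u hau hbu => ?_⟩
  have ha : a ≤ u - c := by
    rw [le_iff_sub hadd]; rw [le_iff_sub hadd] at hau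
    convert hau using 1; abel
  have hb : b ≤ u - c := by
    rw [le_iff_sub hadd]; rw [le_iff_sub hadd] at hbu
    convert hbu using 1; abel
  have := hadd _ _ c (h3 _ ha hb)
  simpa using this

lemma lub_self_of_pos {a : E} (ha : 0 ≤ a) : IsLUB {a, -a} a := by
  rw [pair_lub_iff]
  have hna : -a ≤ 0 := by simpa using hadd 0 a (-a) ha
  exact ⟨⟨le_rfl, hna.trans ha⟩, fun c hc _ => hc⟩

end Order

section OrderSmul
variable (hadd : ∀ x y z : E, x ≤ y → x + z ≤ y + z)
  (hsmul : ∀ (t : ℝ) (x : E), 0 ≤ t → 0 ≤ x → 0 ≤ t • x)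
include hadd hsmul

lemma mysmul_le_smul {t : ℝ} {a b : E} (ht : 0 ≤ t) (h : a ≤ b) : t • a ≤ t • b := by
  rw [le_iff_sub hadd] at h ⊢
  simpa [smul_sub] using hsmul t (b - a) ht h

lemma lub_smul {x p : E} {t : ℝ} (ht : 0 < t) (h : IsLUB {x, 0} p) :
    IsLUB {t • x, 0} (t • p) := by
  rw [pair_lub_iff] at h ⊢
  obtain ⟨⟨h1, h2⟩, h3⟩ := h
  refine ⟨⟨mysmul_le_smul hadd hsmul ht.le h1, by simpa using hsmul t p ht.le h2⟩,
    fun c hc h0c => ?_⟩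
  have h4 : x ≤ t⁻¹ • c := by
    have := mysmul_le_smul hadd hsmul (inv_nonneg.2 ht.le) hc
    rwa [smul_smul, inv_mul_cancel₀ ht.ne', one_smul] at this
  have h5 : (0:E) ≤ t⁻¹ • c := by simpa using hsmul t⁻¹ c (inv_nonneg.2 ht.le) h0c
  have := mysmul_le_smul hadd hsmul ht.le (h3 _ h4 h5)
  rwa [smul_smul, mul_inv_cancel₀ ht.ne', one_smul] at this

end OrderSmul
end Helpers
section PartB
variable {E : Type*} [NormedAddCommGroup E] [InnerProductSpace ℝ E] [PartialOrder E]

lemma proj_fix {P : E → E}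
    (huniq : ∀ x q : E, IsBestApprox {z : E | 0 ≤ z} x q → q = P x)
    {z : E} (hz : 0 ≤ z) : P z = z := by
  refine (huniq z z ⟨hz, fun y _ => ?_⟩).symm
  simp

lemma partB (hadd : ∀ x y z : E, x ≤ y → x + z ≤ y + z)
    (hdir : ∀ x y : E, ∃ z : E, x ≤ z ∧ y ≤ z)
    (P : E → E)
    (hba : ∀ x : E, IsBestApprox {z : E | 0 ≤ z} x (P x))
    (huniq : ∀ x q : E, IsBestApprox {z : E | 0 ≤ z} x q → q = P x)
    (hiso : ∀ x y : E, x ≤ y → P x ≤ P y)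
    (hsub : ∀ x y : E, P (x + y) ≤ P x + P y) :
    ∀ x : E, IsLUB {x, 0} (P x) := by
  intro x
  rw [pair_lub_iff]
  have hPpos : 0 ≤ P x := (hba x).1
  have hxle : x ≤ P x := by
    obtain ⟨z, hxz, h0z⟩ := hdir x 0
    set d := z - x with hd
    have hd0 : 0 ≤ d := by rwa [← le_iff_sub hadd]
    have hzd : z = x + d := by rw [hd]; abel
    have h1 : P (x + d) ≤ P x + P d := hsub x d
    rw [proj_fix huniq hd0, ← hzd, proj_fix huniq h0z] at h1
    -- z ≤ P x + d, d = z - x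
    rw [le_iff_sub hadd] at h1 ⊢
    convert h1 using 1
    rw [hd]; abel
  refine ⟨⟨hxle, hPpos⟩, fun b hxb h0b => ?_⟩
  have := hiso x b hxb
  rwa [proj_fix huniq h0b] at this

end PartB
section BtoA
variable {E : Type*} [NormedAddCommGroup E] [InnerProductSpace ℝ E] [PartialOrder E]

lemma subdual_of_P (hadd : ∀ x y z : E, x ≤ y → x + z ≤ y + z)
    (hsmul : ∀ (t : ℝ) (x : E), 0 ≤ t → 0 ≤ x → 0 ≤ t • x)
    (hdir : ∀ x y : E, ∃ z : E, x ≤ z ∧ y ≤ z)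
    (P : E → E)
    (hba : ∀ x : E, IsBestApprox {z : E | 0 ≤ z} x (P x))
    (huniq : ∀ x q : E, IsBestApprox {z : E | 0 ≤ z} x q → q = P x)
    (hiso : ∀ x y : E, x ≤ y → P x ≤ P y)
    (hsub : ∀ x y : E, P (x + y) ≤ P x + P y) :
    ∀ u v : E, 0 ≤ u → 0 ≤ v → 0 ≤ (inner ℝ u v : ℝ) := by
  intro u v hu hv
  have hb := partB hadd hdir P hba huniq hiso hsub
  have hnv : IsLUB {-v, 0} (0:E) := by
    rw [pair_lub_iff]
    have : -v ≤ 0 := by simpa using hadd 0 v (-v) hv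
    exact ⟨⟨this, le_rfl⟩, fun c _ hc => hc⟩
  have hP0 : P (-v) = 0 := ((hb (-v)).unique hnv)
  have hbest := (hba (-v)).2
  rw [hP0] at hbest
  have key : ∀ t : ℝ, 0 < t → t ≤ 1 → -(2 * (inner ℝ u v : ℝ)) ≤ t * ‖u‖^2 := by
    intro t ht _
    have hmem : (0:E) ≤ t • u := hsmul t u ht.le hu
    have h1 : ‖-v - 0‖ ≤ ‖-v - t • u‖ := hbest (t • u) hmem
    have h2 : ‖-v - t • u‖^2 = ‖v‖^2 + 2 * (t * (inner ℝ v u : ℝ)) + t^2 * ‖u‖^2 := by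
      have : -v - t • u = -(v + t • u) := by abel
      rw [this, norm_neg, norm_add_sq_real, real_inner_smul_right, norm_smul,
        Real.norm_eq_abs, mul_pow, sq_abs]
    have h3 : ‖-v - 0‖ = ‖v‖ := by simp
    rw [h3] at h1
    have h4 : ‖v‖^2 ≤ ‖-v - t • u‖^2 := pow_le_pow_left₀ (norm_nonneg v) h1 2
    rw [h2] at h4
    have hc : (inner ℝ v u : ℝ) = inner ℝ u v := real_inner_comm u v
    have h5 : (-(2 * (inner ℝ u v : ℝ))) * t ≤ (t * ‖u‖^2) * t := by nlinarith
    exact le_of_mul_le_mul_right h5 ht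
  have := aux_le _ _ key
  linarith

lemma orth_of_P
    (hsmul : ∀ (t : ℝ) (x : E), 0 ≤ t → 0 ≤ x → 0 ≤ t • x)
    (P : E → E)
    (hba : ∀ x : E, IsBestApprox {z : E | 0 ≤ z} x (P x)) :
    ∀ x : E, (inner ℝ (x - P x) (P x) : ℝ) = 0 := by
  intro x
  set p := P x with hp
  have hp0 : 0 ≤ p := (hba x).1
  have hbest := (hba x).2
  have expand : ∀ t : ℝ, ‖(x - p) - t • p‖^2
      = ‖x - p‖^2 - 2 * (t * (inner ℝ (x - p) p : ℝ)) + t^2 * ‖p‖^2 := by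
    intro t
    rw [norm_sub_sq_real, real_inner_smul_right, norm_smul, Real.norm_eq_abs,
      mul_pow, sq_abs]
  have key1 : ∀ t : ℝ, 0 < t → t ≤ 1 → 2 * (inner ℝ (x - p) p : ℝ) ≤ t * ‖p‖^2 := by
    intro t ht _
    have hmem : (0:E) ≤ (1 + t) • p := hsmul _ _ (by linarith) hp0
    have h1 := hbest _ hmem
    have h2 : x - (1 + t) • p = (x - p) - t • p := by
      rw [add_smul, one_smul]; abel
    rw [h2] at h1
    have h4 : ‖x - p‖^2 ≤ ‖(x - p) - t • p‖^2 := pow_le_pow_left₀ (norm_nonneg _) h1 2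
    rw [expand t] at h4
    have h5 : (2 * (inner ℝ (x - p) p : ℝ)) * t ≤ (t * ‖p‖^2) * t := by nlinarith
    exact le_of_mul_le_mul_right h5 ht
  have key2 : ∀ t : ℝ, 0 < t → t ≤ 1 → -(2 * (inner ℝ (x - p) p : ℝ)) ≤ t * ‖p‖^2 := by
    intro t ht ht1
    have hmem : (0:E) ≤ (1 - t) • p := hsmul _ _ (by linarith) hp0
    have h1 := hbest _ hmem
    have h2 : x - (1 - t) • p = (x - p) - (-t) • p := by
      rw [sub_smul, one_smul, neg_smul]; abel
    rw [h2] at h1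
    have h4 : ‖x - p‖^2 ≤ ‖(x - p) - (-t) • p‖^2 := pow_le_pow_left₀ (norm_nonneg _) h1 2
    rw [expand (-t)] at h4
    have h5 : (-(2 * (inner ℝ (x - p) p : ℝ))) * t ≤ (t * ‖p‖^2) * t := by nlinarith
    exact le_of_mul_le_mul_right h5 ht
  have h1 := aux_le _ _ key1
  have h2 := aux_le _ _ key2
  linarith

end BtoA
section BtoA2
variable {E : Type*} [NormedAddCommGroup E] [InnerProductSpace ℝ E] [PartialOrder E]

lemma abs_eq_of_P (hadd : ∀ x y z : E, x ≤ y → x + z ≤ y + z)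
    (hsmul : ∀ (t : ℝ) (x : E), 0 ≤ t → 0 ≤ x → 0 ≤ t • x)
    (hdir : ∀ x y : E, ∃ z : E, x ≤ z ∧ y ≤ z)
    (P : E → E)
    (hba : ∀ x : E, IsBestApprox {z : E | 0 ≤ z} x (P x))
    (huniq : ∀ x q : E, IsBestApprox {z : E | 0 ≤ z} x q → q = P x)
    (hiso : ∀ x y : E, x ≤ y → P x ≤ P y)
    (hsub : ∀ x y : E, P (x + y) ≤ P x + P y) :
    ∀ x s : E, IsLUB {x, -x} s → s = P x + (P x - x) := by
  intro x s hs
  have hb := partB hadd hdir P hba huniq hiso hsub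
  -- shift by x
  have h1 : IsLUB {x + x, -x + x} (s + x) := pair_shift hadd hs
  have hset : ({x + x, -x + x} : Set E) = {x + x, 0} := by rw [neg_add_cancel]
  rw [hset] at h1
  -- P (x + x) = P x + P x
  have h2 : IsLUB {(2:ℝ) • x, 0} ((2:ℝ) • P x) := lub_smul hadd hsmul two_pos (hb x)
  rw [two_smul, two_smul] at h2
  have h3 : s + x = P x + P x := h1.unique h2
  have : s = P x + P x - x := by rw [← h3]; abel
  rw [this]; abel

lemma latticeB (hadd : ∀ x y z : E, x ≤ y → x + z ≤ y + z)
    (hsmul : ∀ (t : ℝ) (x : E), 0 ≤ t → 0 ≤ x → 0 ≤ t • x)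
    (hdir : ∀ x y : E, ∃ z : E, x ≤ z ∧ y ≤ z)
    (P : E → E)
    (hba : ∀ x : E, IsBestApprox {z : E | 0 ≤ z} x (P x))
    (huniq : ∀ x q : E, IsBestApprox {z : E | 0 ≤ z} x q → q = P x)
    (hiso : ∀ x y : E, x ≤ y → P x ≤ P y)
    (hsub : ∀ x y : E, P (x + y) ≤ P x + P y) :
    ∀ x y s t : E, IsLUB {x, -x} s → IsLUB {y, -y} t → s ≤ t → ‖x‖ ≤ ‖y‖ := by
  have hb := partB hadd hdir P hba huniq hiso hsub
  have horth := orth_of_P hsmul P hba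
  have hdual := subdual_of_P hadd hsmul hdir P hba huniq hiso hsub
  -- key facts for each element
  have main : ∀ x s : E, IsLUB {x, -x} s → ‖s‖ = ‖x‖ ∧ 0 ≤ s := by
    intro x s hs
    have hseq : s = P x + (P x - x) :=
      abs_eq_of_P hadd hsmul hdir P hba huniq hiso hsub x s hs
    set p := P x
    set n := P x - x with hn
    have hp0 : 0 ≤ p := (hba x).1
    have hn0 : 0 ≤ n := by
      rw [hn, ← le_iff_sub hadd]
      exact ((pair_lub_iff.1 (hb x)).1).1
    have hinner : (inner ℝ p n : ℝ) = 0 := by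
      have := horth x
      have hneg : (inner ℝ (x - P x) (P x) : ℝ) = -(inner ℝ p n : ℝ) := by
        rw [hn, real_inner_comm]
        rw [show x - P x = -(P x - x) by abel, inner_neg_right]
      rw [hneg] at this
      linarith
    have hxeq : x = p - n := by rw [hn]; abel
    have hnorm : ‖s‖ = ‖x‖ := by
      have e1 : ‖s‖^2 = ‖p‖^2 + 2 * (inner ℝ p n : ℝ) + ‖n‖^2 := by
        rw [hseq, norm_add_sq_real]
      have e2 : ‖x‖^2 = ‖p‖^2 - 2 * (inner ℝ p n : ℝ) + ‖n‖^2 := by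
        rw [hxeq, norm_sub_sq_real]
      have : ‖s‖^2 = ‖x‖^2 := by rw [e1, e2, hinner]; ring
      nlinarith [norm_nonneg s, norm_nonneg x]
    exact ⟨hnorm, hseq ▸ pos_add hadd hp0 hn0⟩
  intro x y s t hsx hty hst
  obtain ⟨hns, hs0⟩ := main x s hsx
  obtain ⟨hnt, ht0⟩ := main y t hty
  rw [← hns, ← hnt]
  -- 0 ≤ s ≤ t implies ‖s‖ ≤ ‖t‖
  have h1 : 0 ≤ t - s := by rwa [← le_iff_sub hadd]
  have h2 : 0 ≤ t + s := pos_add hadd ht0 hs0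
  have h3 : 0 ≤ (inner ℝ (t - s) (t + s) : ℝ) := hdual _ _ h1 h2
  have h4 : (inner ℝ (t - s) (t + s) : ℝ) = ‖t‖^2 - ‖s‖^2 := by
    rw [inner_sub_left, inner_add_right, inner_add_right,
      real_inner_self_eq_norm_sq, real_inner_self_eq_norm_sq, real_inner_comm s t]
    ring
  nlinarith [norm_nonneg s, norm_nonneg t]

end BtoA2
section AtoB
variable {E : Type*} [NormedAddCommGroup E] [InnerProductSpace ℝ E] [PartialOrder E]

lemma sq_le_imp {a b : ℝ} (ha : 0 ≤ a) (hb : 0 ≤ b) (h : a^2 ≤ b^2) : a ≤ b := by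
  nlinarith

lemma AtoB (hadd : ∀ x y z : E, x ≤ y → x + z ≤ y + z)
    (hsmul : ∀ (t : ℝ) (x : E), 0 ≤ t → 0 ≤ x → 0 ≤ t • x)
    (h1 : ∀ x : E, ∃ s : E, IsLUB {x, 0} s)
    (hn : ∀ x y s t : E, IsLUB {x, -x} s → IsLUB {y, -y} t → s ≤ t → ‖x‖ ≤ ‖y‖) :
    ∃ P : E → E,
      (∀ x : E, IsBestApprox {z : E | 0 ≤ z} x (P x)) ∧
      (∀ x q : E, IsBestApprox {z : E | 0 ≤ z} x q → q = P x) ∧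
      (∀ x y : E, x ≤ y → P x ≤ P y) ∧
      (∀ x y : E, P (x + y) ≤ P x + P y) := by
  choose P hP using h1
  have hub : ∀ x : E, x ≤ P x ∧ 0 ≤ P x := fun x => (pair_lub_iff.1 (hP x)).1
  have hiso : ∀ x y : E, x ≤ y → P x ≤ P y := by
    intro x y h
    exact (pair_lub_iff.1 (hP x)).2 _ (h.trans (hub y).1) (hub y).2
  have hsubadd : ∀ x y : E, P (x + y) ≤ P x + P y := by
    intro x y
    refine (pair_lub_iff.1 (hP (x + y))).2 _ ?_ (pos_add hadd (hub x).2 (hub y).2)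
    calc x + y ≤ P x + y := hadd x (P x) y (hub x).1
      _ = y + P x := add_comm _ _
      _ ≤ P y + P x := hadd y (P y) (P x) (hub y).1
      _ = P x + P y := add_comm _ _
  have hnx : ∀ x : E, 0 ≤ P x - x := fun x => (le_iff_sub hadd _ _).1 (hub x).1
  have hmpos : ∀ x : E, 0 ≤ P x + (P x - x) := fun x => pos_add hadd (hub x).2 (hnx x)
  have hm : ∀ x : E, IsLUB {x, -x} (P x + (P x - x)) := by
    intro x
    have h2 : IsLUB {(2:ℝ) • x, 0} ((2:ℝ) • P x) := lub_smul hadd hsmul two_pos (hP x)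
    rw [two_smul, two_smul] at h2
    have h3 := pair_shift hadd (c := -x) h2
    have e1 : x + x + -x = x := by abel
    have e2 : (0:E) + -x = -x := by abel
    have e3 : P x + P x + -x = P x + (P x - x) := by abel
    rw [e1, e2, e3] at h3
    exact h3
  have hnormeq : ∀ x : E, ‖x‖ = ‖P x + (P x - x)‖ := by
    intro x
    have l1 := hm x
    have l2 : IsLUB {P x + (P x - x), -(P x + (P x - x))} (P x + (P x - x)) :=
      lub_self_of_pos hadd (hmpos x)
    exact le_antisymm (hn _ _ _ _ l1 l2 le_rfl) (hn _ _ _ _ l2 l1 le_rfl)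
  have hdual : ∀ u v : E, 0 ≤ u → 0 ≤ v → 0 ≤ (inner ℝ u v : ℝ) := by
    intro u v hu hv
    have lub_a := hm (u - v)
    have hbpos : 0 ≤ u + v := pos_add hadd hu hv
    have lub_b := lub_self_of_pos hadd hbpos
    have hub1 : u - v ≤ u + v := by
      rw [le_iff_sub hadd]
      have e : (u + v) - (u - v) = v + v := by abel
      rw [e]; exact pos_add hadd hv hv
    have hub2 : -(u - v) ≤ u + v := by
      rw [le_iff_sub hadd]
      have e : (u + v) - -(u - v) = u + u := by abel
      rw [e]; exact pos_add hadd hu hu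
    have hle : P (u - v) + (P (u - v) - (u - v)) ≤ u + v :=
      (pair_lub_iff.1 lub_a).2 _ hub1 hub2
    have hnorm := hn (u - v) (u + v) _ _ lub_a lub_b hle
    have h4 : ‖u - v‖^2 ≤ ‖u + v‖^2 := pow_le_pow_left₀ (norm_nonneg _) hnorm 2
    rw [norm_sub_sq_real, norm_add_sq_real] at h4
    linarith
  have horth : ∀ x : E, (inner ℝ (P x) (P x - x) : ℝ) = 0 := by
    intro x
    have hsq : ‖x‖^2 = ‖P x + (P x - x)‖^2 := by rw [hnormeq x]
    have hxeq : x = P x - (P x - x) := by abel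
    have e1 : ‖x‖^2 = ‖P x‖^2 - 2 * (inner ℝ (P x) (P x - x) : ℝ) + ‖P x - x‖^2 := by
      conv_lhs => rw [hxeq]
      rw [norm_sub_sq_real]
    have e2 : ‖P x + (P x - x)‖^2
        = ‖P x‖^2 + 2 * (inner ℝ (P x) (P x - x) : ℝ) + ‖P x - x‖^2 := norm_add_sq_real _ _
    linarith
  have key : ∀ x y : E, 0 ≤ y → (inner ℝ (x - P x) (y - P x) : ℝ) ≤ 0 := by
    intro x y hy
    have e : x - P x = -(P x - x) := by abel
    rw [e, inner_neg_left, inner_sub_right]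
    have hd := hdual (P x - x) y (hnx x) hy
    have h0 : (inner ℝ (P x - x) (P x) : ℝ) = 0 := by
      rw [real_inner_comm]; exact horth x
    linarith
  have dist_ineq : ∀ x y : E, 0 ≤ y → ‖x - P x‖^2 + ‖y - P x‖^2 ≤ ‖x - y‖^2 := by
    intro x y hy
    have e : x - y = (x - P x) - (y - P x) := by abel
    rw [e]
    have e2 := norm_sub_sq_real (x - P x) (y - P x)
    have := key x y hy
    linarith
  have hbest : ∀ x : E, IsBestApprox {z : E | 0 ≤ z} x (P x) := by
    intro x
    refine ⟨(hub x).2, fun y hy => ?_⟩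
    have h := dist_ineq x y hy
    refine sq_le_imp (norm_nonneg _) (norm_nonneg _) ?_
    nlinarith [sq_nonneg ‖y - P x‖]
  refine ⟨P, hbest, ?_, hiso, hsubadd⟩
  intro x q hq
  have h1 : ‖x - q‖ ≤ ‖x - P x‖ := hq.2 (P x) (hub x).2
  have h2 : ‖x - q‖^2 ≤ ‖x - P x‖^2 := pow_le_pow_left₀ (norm_nonneg _) h1 2
  have h3 := dist_ineq x q hq.1
  have h4 : ‖q - P x‖^2 ≤ 0 := by linarith
  have h5 : ‖q - P x‖ = 0 := by nlinarith [norm_nonneg (q - P x)]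
  have := norm_eq_zero.1 h5
  exact sub_eq_zero.1 this

end AtoB

theorem stmt_0 {E : Type*} [NormedAddCommGroup E] [InnerProductSpace ℝ E] [PartialOrder E]
    (hadd : ∀ x y z : E, x ≤ y → x + z ≤ y + z)
    (hsmul : ∀ (t : ℝ) (x : E), 0 ≤ t → 0 ≤ x → 0 ≤ t • x)
    (hdir : ∀ x y : E, ∃ z : E, x ≤ z ∧ y ≤ z) :
    (((∀ x : E, ∃ s : E, IsLUB {x, 0} s) ∧
        (∀ x y s t : E, IsLUB {x, -x} s → IsLUB {y, -y} t → s ≤ t → ‖x‖ ≤ ‖y‖)) ↔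
      (∃ P : E → E,
        (∀ x : E, IsBestApprox {z : E | 0 ≤ z} x (P x)) ∧
        (∀ x q : E, IsBestApprox {z : E | 0 ≤ z} x q → q = P x) ∧
        (∀ x y : E, x ≤ y → P x ≤ P y) ∧
        (∀ x y : E, P (x + y) ≤ P x + P y))) ∧
    (∀ P : E → E,
      (∀ x : E, IsBestApprox {z : E | 0 ≤ z} x (P x)) →
      (∀ x q : E, IsBestApprox {z : E | 0 ≤ z} x q → q = P x) →
      (∀ x y : E, x ≤ y → P x ≤ P y) →
      (∀ x y : E, P (x + y) ≤ P x + P y) →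
      ∀ x : E, IsLUB {x, 0} (P x)) := by
  constructor
  · constructor
    · rintro ⟨h1, hn⟩
      exact AtoB hadd hsmul h1 hn
    · rintro ⟨P, hba, huniq, hiso, hsub⟩
      have hb := partB hadd hdir P hba huniq hiso hsub
      exact ⟨fun x => ⟨P x, hb x⟩, latticeB hadd hsmul hdir P hba huniq hiso hsub⟩
  · intro P hba huniq hiso hsub
    exact partB hadd hdir P hba huniq hiso hsub
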